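/- The quantity ω(g,h) = (1/(2πi))(Log j(g, h·z) + Log j(h, z) − Log j(gh, z)) is independent of the choice of z ∈ ℍ. -/

import Mathlib

open Matrix UpperHalfPlane Complex

abbrev SL2R := Matrix.SpecialLinearGroup (Fin 2) ℝ

/-- The automorphy factor `j(g,z) = cz + d`. -/
noncomputable def jFac (g : SL2R) (z : ℂ) : ℂ :=
  (g.1 1 0 : ℝ) * z + (g.1 1 1 : ℝ)

/-- Petersson's 2-cocycle
`ω(g,h) = (1/(2πi))(Log j(g, h·z) + Log j(h,z) − Log j(gh,z))`. -/
noncomputable def omegaC (g h : SL2R) (z : ℍ) : ℂ :=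
  (1 / (2 * Real.pi * Complex.I)) *
    (Complex.log (jFac g ((h • z : ℍ) : ℂ)) + Complex.log (jFac h (z : ℂ))
      - Complex.log (jFac (g * h) (z : ℂ)))


lemma im_aux (n : ℤ) : ((n:ℂ) * (2 * Real.pi * Complex.I)).im = n * (2 * Real.pi) := by
  simp [Complex.mul_im]

lemma jFac_ne_zero (g : SL2R) (z : ℍ) : jFac g (z : ℂ) ≠ 0 := by
  have hcd : ![g.1 1 0, g.1 1 1] ≠ 0 := by
    intro hh
    have h0 : g.1 1 0 = 0 := congr_fun hh 0
    have h1 : g.1 1 1 = 0 := congr_fun hh 1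
    have := g.2
    rw [Matrix.det_fin_two, h0, h1] at this
    simp at this
  have := UpperHalfPlane.linear_ne_zero (cd := ![g.1 1 0, g.1 1 1]) z hcd
  simpa [jFac] using this

lemma coe_smul_eq (h : SL2R) (z : ℍ) :
    ((h • z : ℍ) : ℂ) = ((h.1 0 0 : ℝ) * z + (h.1 0 1 : ℝ)) / jFac h (z : ℂ) := by
  rw [UpperHalfPlane.specialLinearGroup_apply]
  simp [jFac]

lemma jFac_cocycle (g h : SL2R) (z : ℍ) :
    jFac g ((h • z : ℍ) : ℂ) * jFac h (z : ℂ) = jFac (g * h) (z : ℂ) := by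
  have hD := jFac_ne_zero h z
  rw [coe_smul_eq]
  simp only [jFac] at *
  have hD' : (z:ℂ) * (h.1 1 0 : ℝ) + (h.1 1 1 : ℝ) ≠ 0 := by rwa [mul_comm]
  field_simp
  simp only [Matrix.SpecialLinearGroup.coe_mul, Matrix.mul_apply, Fin.sum_univ_succ,
    Finset.univ_unique, Fin.default_eq_zero, Finset.sum_singleton, Fin.succ_zero_eq_one,
    Complex.ofReal_add, Complex.ofReal_mul]
  ring

lemma cont_log_jFac (g : SL2R) : Continuous fun z : ℍ => Complex.log (jFac g (z : ℂ)) := by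
  by_cases hc : g.1 1 0 = 0
  · have : (fun z : ℍ => Complex.log (jFac g (z : ℂ))) =
        fun _ => Complex.log ((g.1 1 1 : ℝ)) := by
      funext z; simp [jFac, hc]
    rw [this]; exact continuous_const
  · rw [continuous_iff_continuousAt]
    intro z
    have hcont : Continuous fun z : ℍ => jFac g (z : ℂ) := by
      simp only [jFac]
      exact (continuous_const.mul UpperHalfPlane.continuous_coe).add continuous_const
    apply (continuousAt_clog ?_).comp hcont.continuousAt
    rw [Complex.mem_slitPlane_iff]
    right
    simp only [jFac, Complex.add_im, Complex.mul_im, Complex.ofReal_re, Complex.ofReal_im,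
      zero_mul, add_zero, Complex.ofReal_im]
    simpa [UpperHalfPlane.coe_im] using mul_ne_zero (by exact_mod_cast hc) z.im_ne_zero

lemma cont_smul (h : SL2R) : Continuous fun z : ℍ => (h • z : ℍ) := by
  rw [UpperHalfPlane.isEmbedding_coe.continuous_iff]
  have : ((↑) ∘ fun z : ℍ => (h • z : ℍ)) =
      fun z : ℍ => ((h.1 0 0 : ℝ) * (z:ℂ) + (h.1 0 1 : ℝ)) / jFac h (z : ℂ) := by
    funext z; exact coe_smul_eq h z
  rw [this]
  apply Continuous.div
  · exact (continuous_const.mul UpperHalfPlane.continuous_coe).add continuous_const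
  · simp only [jFac]
    exact (continuous_const.mul UpperHalfPlane.continuous_coe).add continuous_const
  · exact fun z => jFac_ne_zero h z

/-- `ω(g,h)` is independent of the choice of `z ∈ ℍ`. -/
theorem omegaC_indep (g h : SL2R) (z w : ℍ) : omegaC g h z = omegaC g h w := by
  set f : ℍ → ℂ := fun z =>
    Complex.log (jFac g ((h • z : ℍ) : ℂ)) + Complex.log (jFac h (z : ℂ))
      - Complex.log (jFac (g * h) (z : ℂ)) with hf
  have hint : ∀ z : ℍ, ∃ n : ℤ, f z = n * (2 * Real.pi * Complex.I) := by
    intro z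
    rw [← Complex.exp_eq_one_iff]
    have hA : jFac g ((h • z : ℍ) : ℂ) ≠ 0 := jFac_ne_zero g (h • z)
    have hB := jFac_ne_zero h z
    have hC := jFac_ne_zero (g * h) z
    rw [hf]
    simp only [Complex.exp_sub, Complex.exp_add, Complex.exp_log hA, Complex.exp_log hB,
      Complex.exp_log hC]
    rw [jFac_cocycle g h z, div_self hC]
  have hcont : Continuous f := by
    apply Continuous.sub
    · exact (((cont_log_jFac g).comp (cont_smul h)).add (cont_log_jFac h))
    · exact cont_log_jFac (g * h)
  -- imaginary parts
  have him : (f z).im = (f w).im := by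
    obtain ⟨nz, hnz⟩ := hint z
    obtain ⟨nw, hnw⟩ := hint w
    have hti : ∀ u : ℍ, ∃ n : ℤ, (f u).im = n * (2 * Real.pi) := by
      intro u
      obtain ⟨n, hn⟩ := hint u
      exact ⟨n, by rw [hn, im_aux]⟩
    by_contra hne
    have hc : Continuous fun u : ℍ => (f u).im := Complex.continuous_im.comp hcont
    have hnzw : nz ≠ nw := by
      intro hh; apply hne; rw [hnz, hnw, hh]
    -- a value strictly between, not a multiple of 2π
    have hπ : (0:ℝ) < Real.pi := Real.pi_pos
    have hiz : (f z).im = nz * (2 * Real.pi) := by rw [hnz, im_aux]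
    have hiw : (f w).im = nw * (2 * Real.pi) := by rw [hnw, im_aux]
    rcases lt_or_gt_of_ne hnzw with hlt | hlt
    · have hmem : ((2 * nz + 1) * Real.pi) ∈ Set.Icc ((f z).im) ((f w).im) := by
        rw [hiz, hiw]
        constructor
        · nlinarith [hπ]
        · have : (nz : ℝ) + 1 ≤ nw := by exact_mod_cast hlt
          nlinarith [hπ]
      obtain ⟨u, hu0⟩ := intermediate_value_univ z w hc hmem
      have hu : (f u).im = (2 * nz + 1) * Real.pi := hu0
      obtain ⟨n, hn⟩ := hti u
      rw [hn] at hu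
      have : (n : ℝ) * 2 = 2 * nz + 1 := by
        have := mul_right_cancel₀ hπ.ne' (by linarith [hu] : (n:ℝ) * 2 * Real.pi = (2 * nz + 1) * Real.pi)
        exact this
      have : (n : ℤ) * 2 = 2 * nz + 1 := by exact_mod_cast this
      omega
    · have hmem : ((2 * nw + 1) * Real.pi) ∈ Set.Icc ((f w).im) ((f z).im) := by
        rw [hiz, hiw]
        constructor
        · nlinarith [hπ]
        · have : (nw : ℝ) + 1 ≤ nz := by exact_mod_cast hlt
          nlinarith [hπ]
      obtain ⟨u, hu0⟩ := intermediate_value_univ w z hc hmem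
      have hu : (f u).im = (2 * nw + 1) * Real.pi := hu0
      obtain ⟨n, hn⟩ := hti u
      rw [hn] at hu
      have : (n : ℝ) * 2 = 2 * nw + 1 := by
        have := mul_right_cancel₀ hπ.ne' (by linarith [hu] : (n:ℝ) * 2 * Real.pi = (2 * nw + 1) * Real.pi)
        exact this
      have : (n : ℤ) * 2 = 2 * nw + 1 := by exact_mod_cast this
      omega
  -- conclude f z = f w
  have hfeq : f z = f w := by
    obtain ⟨nz, hnz⟩ := hint z
    obtain ⟨nw, hnw⟩ := hint w
    have : (nz : ℝ) * (2 * Real.pi) = nw * (2 * Real.pi) := by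
      have h1 : (f z).im = nz * (2 * Real.pi) := by rw [hnz, im_aux]
      have h2 : (f w).im = nw * (2 * Real.pi) := by rw [hnw, im_aux]
      rw [← h1, ← h2, him]
    have : (nz : ℝ) = nw :=
      mul_right_cancel₀ (by positivity) this
    have : nz = nw := by exact_mod_cast this
    rw [hnz, hnw, this]
  unfold omegaC
  rw [show Complex.log (jFac g ((h • z : ℍ) : ℂ)) + Complex.log (jFac h (z : ℂ))
      - Complex.log (jFac (g * h) (z : ℂ)) = f z from rfl, hfeq]
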